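/- Let f be a C¹ quaternionic function on an open set Ω ⊆ H disjoint from the real axis. Then f is left-Cullen-regular on Ω if and only if D_l(ιf) + ι D_l f = −2f/r on Ω, where D_l is the left-Fueter operator and r = |Im p|. -/

import Mathlib

open Quaternion

/-- The quaternion unit `i`. -/
noncomputable def qI : Quaternion ℝ := ⟨0, 1, 0, 0⟩

/-- The quaternion unit `j`. -/
noncomputable def qJ : Quaternion ℝ := ⟨0, 0, 1, 0⟩

/-- The quaternion unit `k`. -/
noncomputable def qK : Quaternion ℝ := ⟨0, 0, 0, 1⟩

/-- The unit imaginary part `ι(p) = Im p / ‖Im p‖`. -/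
noncomputable def iotaOf (p : Quaternion ℝ) : Quaternion ℝ := (‖p.im‖)⁻¹ • p.im

/-- The left-Fueter operator `D_l = ∂/∂t + i ∂/∂x + j ∂/∂y + k ∂/∂z`. -/
noncomputable def fueterL (f : Quaternion ℝ → Quaternion ℝ) (p : Quaternion ℝ) :
    Quaternion ℝ :=
  fderiv ℝ f p 1 + qI * fderiv ℝ f p qI
    + qJ * fderiv ℝ f p qJ
    + qK * fderiv ℝ f p qK

/-- The Cullen operator `∂/∂t + ι ∂/∂r` in the slice coordinates `p = t + rι`. -/
noncomputable def cullenOp (f : Quaternion ℝ → Quaternion ℝ) (p : Quaternion ℝ) :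
    Quaternion ℝ :=
  fderiv ℝ f p 1 + iotaOf p * fderiv ℝ f p (iotaOf p)

/-- The angular operator `∂/∂ι`, defined off the real axis via the
decomposition `D_l = ∂/∂t + ι ∂/∂r − (1/r) ∂/∂ι`. -/
noncomputable def angularOp (f : Quaternion ℝ → Quaternion ℝ) (p : Quaternion ℝ) :
    Quaternion ℝ :=
  ‖p.im‖ • (cullenOp f p - fueterL f p)

section aux

noncomputable def imCLM : ℍ →L[ℝ] ℍ :=
  { toFun := fun q => q.im
    map_add' := fun _ _ => by simp
    map_smul' := fun _ _ => by simp
    cont := Quaternion.continuous_im }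

noncomputable def imICLM : ℍ →L[ℝ] ℝ :=
  { toFun := fun q => q.imI, map_add' := fun _ _ => rfl, map_smul' := fun _ _ => rfl
    cont := Quaternion.continuous_imI }
noncomputable def imJCLM : ℍ →L[ℝ] ℝ :=
  { toFun := fun q => q.imJ, map_add' := fun _ _ => rfl, map_smul' := fun _ _ => rfl
    cont := Quaternion.continuous_imJ }
noncomputable def imKCLM : ℍ →L[ℝ] ℝ :=
  { toFun := fun q => q.imK, map_add' := fun _ _ => rfl, map_smul' := fun _ _ => rfl
    cont := Quaternion.continuous_imK }

lemma normim_eq (q : ℍ) : ‖q.im‖ = Real.sqrt (q.imI*q.imI + q.imJ*q.imJ + q.imK*q.imK) := by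
  rw [norm_eq_sqrt_real_inner, inner_self, normSq_def']
  simp [sq]

lemma normim_pos {p : ℍ} (hp : p.im ≠ 0) : 0 < ‖p.im‖ := norm_pos_iff.2 hp

lemma sumsq_eq (p : ℍ) : p.imI*p.imI + p.imJ*p.imJ + p.imK*p.imK = ‖p.im‖^2 := by
  rw [normim_eq, Real.sq_sqrt]
  nlinarith [sq_nonneg p.imI, sq_nonneg p.imJ, sq_nonneg p.imK]

lemma hasFDerivAt_normim (p : ℍ) (hp : p.im ≠ 0) :
    HasFDerivAt (fun q : ℍ => ‖q.im‖)
      ((‖p.im‖)⁻¹ • (p.imI • imICLM + p.imJ • imJCLM + p.imK • imKCLM)) p := by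
  have hs : HasFDerivAt (fun q : ℍ => q.imI*q.imI + q.imJ*q.imJ + q.imK*q.imK)
      ((p.imI • imICLM + p.imI • imICLM) + (p.imJ • imJCLM + p.imJ • imJCLM)
        + (p.imK • imKCLM + p.imK • imKCLM)) p := by
    exact ((imICLM.hasFDerivAt.mul imICLM.hasFDerivAt).add
      (imJCLM.hasFDerivAt.mul imJCLM.hasFDerivAt)).add
      (imKCLM.hasFDerivAt.mul imKCLM.hasFDerivAt)
  have hpos : (0:ℝ) < p.imI*p.imI + p.imJ*p.imJ + p.imK*p.imK := by
    rw [sumsq_eq]; exact pow_pos (normim_pos hp) 2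
  have hsq := (Real.hasDerivAt_sqrt (ne_of_gt hpos)).comp_hasFDerivAt p hs
  have : (fun q : ℍ => ‖q.im‖)
      = (Real.sqrt ∘ fun q : ℍ => q.imI*q.imI + q.imJ*q.imJ + q.imK*q.imK) := by
    funext q; exact normim_eq q
  rw [this]
  refine hsq.congr_fderiv ?_
  ext v
  simp [imICLM, imJCLM, imKCLM, normim_eq p]
  field_simp
  ring

lemma hasFDerivAt_iotaOf (p : ℍ) (hp : p.im ≠ 0) :
    HasFDerivAt iotaOf
      ((-(‖p.im‖^2)⁻¹ • ((‖p.im‖)⁻¹ • (p.imI • imICLM + p.imJ • imJCLM + p.imK • imKCLM))).smulRight p.im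
        + (‖p.im‖)⁻¹ • imCLM) p := by
  have hinv := (hasDerivAt_inv (ne_of_gt (normim_pos hp))).comp_hasFDerivAt p (hasFDerivAt_normim p hp)
  have h1 := hinv.smul imCLM.hasFDerivAt
  refine h1.congr_fderiv ?_
  exact add_comm _ _

lemma fderiv_iotaOf_apply (p : ℍ) (hp : p.im ≠ 0) (v : ℍ) :
    fderiv ℝ iotaOf p v =
      (‖p.im‖)⁻¹ • v.im
        - ((p.imI*v.imI + p.imJ*v.imJ + p.imK*v.imK) / ‖p.im‖^3) • p.im := by
  rw [(hasFDerivAt_iotaOf p hp).fderiv]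
  have hr := (normim_pos hp).ne'
  simp [imCLM, imICLM, imJCLM, imKCLM, sub_eq_add_neg, ContinuousLinearMap.coe_mk', LinearMap.coe_mk, AddHom.coe_mk]
  rw [add_comm]
  congr 1
  rw [← neg_smul]
  congr 1
  field_simp
  ring
  rfl

-- multiplication table
lemma qII : qI * qI = -1 := by ext <;> simp only [Quaternion.re_mul, Quaternion.imI_mul, Quaternion.imJ_mul, Quaternion.imK_mul, Quaternion.re_neg, Quaternion.imI_neg, Quaternion.imJ_neg, Quaternion.imK_neg] <;> simp [qI]
lemma qJJ : qJ * qJ = -1 := by ext <;> simp only [Quaternion.re_mul, Quaternion.imI_mul, Quaternion.imJ_mul, Quaternion.imK_mul, Quaternion.re_neg, Quaternion.imI_neg, Quaternion.imJ_neg, Quaternion.imK_neg] <;> simp [qJ]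
lemma qKK : qK * qK = -1 := by ext <;> simp only [Quaternion.re_mul, Quaternion.imI_mul, Quaternion.imJ_mul, Quaternion.imK_mul, Quaternion.re_neg, Quaternion.imI_neg, Quaternion.imJ_neg, Quaternion.imK_neg] <;> simp [qK]
lemma qIJ : qI * qJ = qK := by ext <;> simp only [Quaternion.re_mul, Quaternion.imI_mul, Quaternion.imJ_mul, Quaternion.imK_mul, Quaternion.re_neg, Quaternion.imI_neg, Quaternion.imJ_neg, Quaternion.imK_neg] <;> simp [qI, qJ, qK]
lemma qJI : qJ * qI = -qK := by ext <;> simp only [Quaternion.re_mul, Quaternion.imI_mul, Quaternion.imJ_mul, Quaternion.imK_mul, Quaternion.re_neg, Quaternion.imI_neg, Quaternion.imJ_neg, Quaternion.imK_neg] <;> simp [qI, qJ, qK]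
lemma qJK : qJ * qK = qI := by ext <;> simp only [Quaternion.re_mul, Quaternion.imI_mul, Quaternion.imJ_mul, Quaternion.imK_mul, Quaternion.re_neg, Quaternion.imI_neg, Quaternion.imJ_neg, Quaternion.imK_neg] <;> simp [qI, qJ, qK]
lemma qKJ : qK * qJ = -qI := by ext <;> simp only [Quaternion.re_mul, Quaternion.imI_mul, Quaternion.imJ_mul, Quaternion.imK_mul, Quaternion.re_neg, Quaternion.imI_neg, Quaternion.imJ_neg, Quaternion.imK_neg] <;> simp [qI, qJ, qK]
lemma qKI : qK * qI = qJ := by ext <;> simp only [Quaternion.re_mul, Quaternion.imI_mul, Quaternion.imJ_mul, Quaternion.imK_mul, Quaternion.re_neg, Quaternion.imI_neg, Quaternion.imJ_neg, Quaternion.imK_neg] <;> simp [qI, qJ, qK]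
lemma qIK : qI * qK = -qJ := by ext <;> simp only [Quaternion.re_mul, Quaternion.imI_mul, Quaternion.imJ_mul, Quaternion.imK_mul, Quaternion.re_neg, Quaternion.imI_neg, Quaternion.imJ_neg, Quaternion.imK_neg] <;> simp [qI, qJ, qK]

lemma im_decomp (a : ℍ) (h : a.re = 0) : a = a.imI • qI + a.imJ • qJ + a.imK • qK := by
  ext <;> simp [h] <;> simp [qI, qJ, qK]

lemma one_im : (1:ℍ).im = 0 := by ext <;> simp
@[simp] lemma qI_imI : qI.imI = 1 := rfl
@[simp] lemma qI_imJ : qI.imJ = 0 := rfl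
@[simp] lemma qI_imK : qI.imK = 0 := rfl
@[simp] lemma qJ_imI : qJ.imI = 0 := rfl
@[simp] lemma qJ_imJ : qJ.imJ = 1 := rfl
@[simp] lemma qJ_imK : qJ.imK = 0 := rfl
@[simp] lemma qK_imI : qK.imI = 0 := rfl
@[simp] lemma qK_imJ : qK.imJ = 0 := rfl
@[simp] lemma qK_imK : qK.imK = 1 := rfl
lemma qI_im : qI.im = qI := by ext <;> simp only [Quaternion.re_im, Quaternion.imI_im, Quaternion.imJ_im, Quaternion.imK_im] <;> simp [qI]
lemma qJ_im : qJ.im = qJ := by ext <;> simp only [Quaternion.re_im, Quaternion.imI_im, Quaternion.imJ_im, Quaternion.imK_im] <;> simp [qJ]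
lemma qK_im : qK.im = qK := by ext <;> simp only [Quaternion.re_im, Quaternion.imI_im, Quaternion.imJ_im, Quaternion.imK_im] <;> simp [qK]

set_option maxHeartbeats 1000000 in
lemma alg (x y z r : ℝ) (hr : r ≠ 0) (h : x*x+y*y+z*z = r^2) (F w1 wi wj wk : ℍ) :
    r⁻¹ • ((x•qI+y•qJ+z•qK) * w1)
      + qI * (r⁻¹ • ((x•qI+y•qJ+z•qK) * wi) + (r⁻¹ • qI - (x/r^3) • (x•qI+y•qJ+z•qK)) * F)
      + qJ * (r⁻¹ • ((x•qI+y•qJ+z•qK) * wj) + (r⁻¹ • qJ - (y/r^3) • (x•qI+y•qJ+z•qK)) * F)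
      + qK * (r⁻¹ • ((x•qI+y•qJ+z•qK) * wk) + (r⁻¹ • qK - (z/r^3) • (x•qI+y•qJ+z•qK)) * F)
      + r⁻¹ • ((x•qI+y•qJ+z•qK) * (w1 + qI*wi + qJ*wj + qK*wk))
    = (-2/r) • F + (2:ℝ) • r⁻¹ • ((x•qI+y•qJ+z•qK) * (w1 + r⁻¹ • ((x•qI+y•qJ+z•qK) *
        (r⁻¹ • x • wi + r⁻¹ • y • wj + r⁻¹ • z • wk)))) := by
  have hkey : (x*x+y*y+z*z) * r⁻¹^3 = r⁻¹ := by rw [h]; field_simp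
  simp only [mul_add, add_mul, sub_mul, mul_sub, smul_sub, smul_mul_assoc, mul_smul_comm,
    ← mul_assoc, qII, qJJ, qKK, qIJ, qJI, qJK, qKJ, qKI, qIK, neg_mul, mul_neg, one_mul,
    mul_one, neg_one_mul]
  match_scalars
  all_goals first
    | ring1
    | linear_combination hkey
    | linear_combination (2*x)*hkey
    | linear_combination (2*y)*hkey
    | linear_combination (2*z)*hkey

lemma key (f : ℍ → ℍ) (p : ℍ) (hp : p.im ≠ 0) (hf : DifferentiableAt ℝ f p) :
    fueterL (fun q => iotaOf q * f q) p + iotaOf p * fueterL f p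
      = ((-2 / ‖p.im‖ : ℝ)) • f p + (2:ℝ) • (iotaOf p * cullenOp f p) := by
  have hι : DifferentiableAt ℝ iotaOf p := (hasFDerivAt_iotaOf p hp).differentiableAt
  have hmul : fderiv ℝ (fun q => iotaOf q * f q) p
      = iotaOf p • fderiv ℝ f p + (fderiv ℝ iotaOf p).smulRight (f p) := fderiv_mul' hι hf
  have hr := (normim_pos hp).ne'
  have him : fderiv ℝ f p p.im
      = p.imI • fderiv ℝ f p qI + p.imJ • fderiv ℝ f p qJ + p.imK • fderiv ℝ f p qK := by
    conv_lhs => rw [im_decomp p.im p.re_im]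
    simp
  rw [fueterL, fueterL, cullenOp, hmul]
  simp only [ContinuousLinearMap.add_apply, ContinuousLinearMap.coe_smul', Pi.smul_apply,
    ContinuousLinearMap.smulRight_apply, fderiv_iotaOf_apply p hp, one_im, qI_im, qJ_im, qK_im,
    Quaternion.imI_im, Quaternion.imJ_im, Quaternion.imK_im]
  rw [iotaOf]
  simp only [map_smul, him]
  norm_num
  -- now reduce to `alg`
  have hsum := sumsq_eq p
  set r : ℝ := ‖p.im‖ with hrdef
  set x : ℝ := p.imI with hxdef
  set y : ℝ := p.imJ with hydef
  set z : ℝ := p.imK with hzdef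
  have hm : p.im = x•qI+y•qJ+z•qK := by
    rw [im_decomp p.im p.re_im]
    simp
    rfl
  rw [hm]
  exact alg x y z r hr hsum (f p) (fderiv ℝ f p 1) (fderiv ℝ f p qI) (fderiv ℝ f p qJ)
    (fderiv ℝ f p qK)

end aux

/-- For `f` of class `C¹` on an open set `Ω` off the real axis, `f` is
left-Cullen-regular on `Ω` iff `D_l(ι f) + ι D_l f = −2f/r` on `Ω`. -/
theorem cullenRegular_iff_fueter_identity
    (Ω : Set (Quaternion ℝ)) (hΩ : IsOpen Ω) (hax : ∀ p ∈ Ω, p.im ≠ 0)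
    (f : Quaternion ℝ → Quaternion ℝ) (hf : ContDiffOn ℝ 1 f Ω) :
    (∀ p ∈ Ω, cullenOp f p = 0) ↔
      ∀ p ∈ Ω, fueterL (fun q => iotaOf q * f q) p + iotaOf p * fueterL f p
        = (-2 / ‖p.im‖) • f p := by
  have hdiff : ∀ p ∈ Ω, DifferentiableAt ℝ f p := fun p hp =>
    ((hf.contDiffAt (hΩ.mem_nhds hp)).differentiableAt one_ne_zero)
  constructor
  · intro hreg p hp
    rw [key f p (hax p hp) (hdiff p hp), hreg p hp, mul_zero, smul_zero, add_zero]
  · intro hid p hp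
    have h := key f p (hax p hp) (hdiff p hp)
    rw [hid p hp] at h
    have h2 : (2:ℝ) • (iotaOf p * cullenOp f p) = 0 := by
      have := h.symm
      rwa [add_eq_left] at this
    have h3 : iotaOf p * cullenOp f p = 0 := by
      have := smul_eq_zero.1 h2
      rcases this with h' | h'
      · norm_num at h'
      · exact h'
    have hι0 : iotaOf p ≠ 0 :=
      smul_ne_zero (inv_ne_zero (normim_pos (hax p hp)).ne') (hax p hp)
    rcases mul_eq_zero.1 h3 with h' | h'
    · exact absurd h' hι0
    · exact h'
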